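/- Let b be a strict cross ratio on the unit circle S¹. Then for every triple of pairwise distinct points x, y, z ∈ S¹, the map t ↦ b(x,y,z,t), restricted to S¹ ∖ {z} with its subspace topology, is a homeomorphism onto ℝ; moreover it sends x to 0 and y to 1. -/

import Mathlib

open Filter Complex

noncomputable def stC (r : ℝ) : ℂ := ⟨(r^2-1)/(r^2+1), 2*r/(r^2+1)⟩

noncomputable def stR (w : ℂ) : ℝ := w.im / (1 - w.re)

lemma stden (r : ℝ) : r^2 + 1 ≠ 0 := by positivity

lemma stC_abs (r : ℝ) : ‖stC r‖ = 1 := by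
  have h : Complex.normSq (stC r) = 1 := by
    rw [stC, normSq_mk]; field_simp; ring
  have := Complex.sq_norm (stC r)
  rw [h] at this
  nlinarith [norm_nonneg (stC r)]

lemma stC_ne_one (r : ℝ) : stC r ≠ 1 := by
  intro h
  have hre : (stC r).re = 1 := by rw [h]; simp
  rw [stC] at hre
  simp at hre
  rw [div_eq_one_iff_eq (stden r)] at hre
  linarith

lemma abs_one_re (w : ℂ) (h : ‖w‖ = 1) (hw : w ≠ 1) : 1 - w.re ≠ 0 := by
  intro hc
  have hre : w.re = 1 := by linarith
  have hn : Complex.normSq w = 1 := by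
    have := Complex.sq_norm w; rw [h] at this; nlinarith
  have him : w.im = 0 := by
    rw [Complex.normSq_apply, hre] at hn; nlinarith
  exact hw (Complex.ext hre him)

lemma stR_stC (r : ℝ) : stR (stC r) = r := by
  rw [stR, stC]
  simp only
  rw [div_eq_iff]
  · field_simp; ring
  · intro hc
    rw [sub_eq_zero] at hc
    rw [eq_comm, div_eq_one_iff_eq (stden r)] at hc
    linarith

lemma stC_stR (w : ℂ) (h : ‖w‖ = 1) (hw : w ≠ 1) : stC (stR w) = w := by
  have hd := abs_one_re w h hw
  have hn : w.re^2 + w.im^2 = 1 := by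
    have := Complex.sq_norm w; rw [h] at this
    rw [Complex.normSq_apply] at this; nlinarith
  have key : (stR w)^2 + 1 = 2 / (1 - w.re) := by
    rw [stR]; field_simp; nlinarith
  have key2 : (stR w)^2 - 1 = 2 * w.re / (1 - w.re) := by
    rw [stR]; field_simp; nlinarith
  apply Complex.ext
  · rw [stC]; simp only
    rw [key, key2]
    rw [div_div_div_eq]
    field_simp
  · rw [stC]; simp only
    rw [key, stR]
    field_simp

lemma stC_eq (r : ℝ) : stC r = ((r^2-1)/(r^2+1) : ℝ) + ((2*r/(r^2+1) : ℝ) : ℂ) * Complex.I := by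
  rw [stC, Complex.mk_eq_add_mul_I]

lemma stC_cont : Continuous stC := by
  have h1 : Continuous fun r : ℝ => (r^2-1)/(r^2+1) :=
    Continuous.div (by continuity) (by continuity) stden
  have h2 : Continuous fun r : ℝ => 2*r/(r^2+1) :=
    Continuous.div (by continuity) (by continuity) stden
  have : Continuous fun r : ℝ => ((r^2-1)/(r^2+1) : ℝ) + ((2*r/(r^2+1) : ℝ) : ℂ) * Complex.I :=
    ((Complex.continuous_ofReal.comp h1).add
      ((Complex.continuous_ofReal.comp h2).mul continuous_const))
  exact this.congr fun r => (stC_eq r).symm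

lemma re_tendsto : Tendsto (fun r : ℝ => (r^2-1)/(r^2+1)) atTop (nhds 1) := by
  have he : ∀ r : ℝ, (r^2-1)/(r^2+1) = 1 - 2/(r^2+1) := by
    intro r; field_simp; ring
  have hsq : Tendsto (fun r : ℝ => r^2 + 1) atTop atTop :=
    tendsto_atTop_add_const_right _ 1 (tendsto_pow_atTop two_ne_zero)
  have h0 : Tendsto (fun r : ℝ => 2/(r^2+1)) atTop (nhds 0) := by
    have := hsq.inv_tendsto_atTop
    have h2 := this.const_mul (2:ℝ)
    simpa [div_eq_mul_inv, mul_zero] using h2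
  have := (tendsto_const_nhds (x := (1:ℝ))).sub h0
  simp only [sub_zero] at this
  exact this.congr fun r => (he r).symm

lemma im_tendsto : Tendsto (fun r : ℝ => 2*r/(r^2+1)) atTop (nhds 0) := by
  have he : ∀ r : ℝ, r ≠ 0 → 2*r/(r^2+1) = 2/(r + 1/r) := by
    intro r hr; rw [div_eq_div_iff (stden r)]
    · field_simp
    · intro hc
      have : r^2 + 1 = 0 := by field_simp at hc; nlinarith [sq_nonneg r]
      exact stden r this
  have hsq : Tendsto (fun r : ℝ => r + 1/r) atTop atTop := by
    apply Tendsto.atTop_add_zero_eventuallyLE tendsto_id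
    filter_upwards [eventually_gt_atTop (0:ℝ)] with r hr
    positivity
  have h0 := hsq.inv_tendsto_atTop.const_mul (2:ℝ)
  simp only [mul_zero] at h0
  apply Tendsto.congr' _ h0
  filter_upwards [eventually_gt_atTop (0:ℝ)] with r hr
  rw [he r hr.ne']; rw [div_eq_mul_inv]; rfl

lemma stC_tendsto_atTop : Tendsto stC atTop (nhds 1) := by
  have h1 := (Complex.continuous_ofReal.tendsto 1).comp re_tendsto
  have h2 := (Complex.continuous_ofReal.tendsto 0).comp im_tendsto
  have := h1.add (h2.mul (tendsto_const_nhds (x := Complex.I)))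
  simp only [Function.comp, Complex.ofReal_one, Complex.ofReal_zero, zero_mul, add_zero] at this
  exact this.congr fun r => (stC_eq r).symm

lemma stC_tendsto_atBot : Tendsto stC atBot (nhds 1) := by
  have hneg : Tendsto (fun r : ℝ => -r) atBot atTop := tendsto_neg_atBot_atTop
  have h := stC_tendsto_atTop.comp hneg
  have he : ∀ r : ℝ, stC (-r) = ⟨(r^2-1)/(r^2+1), -(2*r/(r^2+1))⟩ := by
    intro r; rw [stC]
    congr 1 <;> ring_nf
  -- conj trick: instead show components
  have h1 := re_tendsto.comp hneg
  have h2 := (im_tendsto.comp hneg).neg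
  simp only [Function.comp, neg_zero] at h1 h2
  have h1' : Tendsto (fun r : ℝ => (r^2-1)/(r^2+1)) atBot (nhds 1) := by
    apply h1.congr; intro r; simp [neg_pow]
  have h2' : Tendsto (fun r : ℝ => 2*r/(r^2+1)) atBot (nhds 0) := by
    apply h2.congr; intro r; ring_nf
  have g1 := (Complex.continuous_ofReal.tendsto 1).comp h1'
  have g2 := (Complex.continuous_ofReal.tendsto 0).comp h2'
  have := g1.add (g2.mul (tendsto_const_nhds (x := Complex.I)))
  simp only [Function.comp, Complex.ofReal_one, Complex.ofReal_zero, zero_mul, add_zero] at this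
  exact this.congr fun r => (stC_eq r).symm

/-- The unit circle in `ℂ`, with its subspace topology. -/
def UnitCircle : Type := {z : ℂ // ‖z‖ = 1}

noncomputable instance : TopologicalSpace UnitCircle :=
  instTopologicalSpaceSubtype

instance : T2Space UnitCircle :=
  inferInstanceAs (T2Space {z : ℂ // ‖z‖ = 1})

lemma UnitCircle.val_ne_zero (z : UnitCircle) : z.val ≠ 0 := by
  intro h
  have := z.property
  rw [h] at this
  simp at this

lemma UnitCircle.continuous_val : Continuous (fun z : UnitCircle => z.val) :=
  continuous_subtype_val

lemma UnitCircle.ext_iff' {a b : UnitCircle} : a = b ↔ a.val = b.val := Subtype.ext_iff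

noncomputable def eFun (z : UnitCircle) (r : ℝ) : {t : UnitCircle // t ≠ z} :=
  ⟨⟨z.val * stC r, by rw [norm_mul, z.property, stC_abs, one_mul]⟩, by
    intro h
    replace h : z.val * stC r = z.val := UnitCircle.ext_iff'.mp h
    have := mul_left_cancel₀ (UnitCircle.val_ne_zero z) (h.trans (mul_one z.val).symm)
    exact stC_ne_one r this⟩

noncomputable def eInv (z : UnitCircle) (t : {t : UnitCircle // t ≠ z}) : ℝ :=
  stR (t.val.val / z.val)

lemma eInv_aux (z : UnitCircle) (t : {t : UnitCircle // t ≠ z}) :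
    ‖t.val.val / z.val‖ = 1 ∧ t.val.val / z.val ≠ 1 := by
  constructor
  · rw [norm_div, t.val.property, z.property]; norm_num
  · intro h
    rw [div_eq_one_iff_eq (UnitCircle.val_ne_zero z)] at h
    exact t.property (UnitCircle.ext_iff'.mpr h)

lemma eFun_eInv (z : UnitCircle) (t : {t : UnitCircle // t ≠ z}) : eFun z (eInv z t) = t := by
  obtain ⟨h1, h2⟩ := eInv_aux z t
  apply Subtype.ext
  apply UnitCircle.ext_iff'.mpr
  show z.val * stC (stR (t.val.val / z.val)) = t.val.val
  rw [stC_stR _ h1 h2, mul_div_cancel₀ _ (UnitCircle.val_ne_zero z)]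

lemma eInv_eFun (z : UnitCircle) (r : ℝ) : eInv z (eFun z r) = r := by
  show stR ((z.val * stC r) / z.val) = r
  rw [mul_comm, mul_div_assoc, div_self (UnitCircle.val_ne_zero z), mul_one, stR_stC]

lemma eFun_cont (z : UnitCircle) : Continuous (eFun z) := by
  apply Continuous.subtype_mk
  apply Continuous.subtype_mk
  exact continuous_const.mul stC_cont

lemma eInv_cont (z : UnitCircle) : Continuous (eInv z) := by
  rw [continuous_iff_continuousAt]
  intro t
  have hq : Continuous (fun t : {t : UnitCircle // t ≠ z} => t.val.val / z.val) :=
    (UnitCircle.continuous_val.comp continuous_subtype_val).div_const _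
  obtain ⟨h1, h2⟩ := eInv_aux z t
  apply ContinuousAt.div
  · exact (Complex.continuous_im.comp hq).continuousAt
  · exact (continuous_const.sub (Complex.continuous_re.comp hq)).continuousAt
  · exact abs_one_re _ h1 h2

noncomputable def eHomeo (z : UnitCircle) : ℝ ≃ₜ {t : UnitCircle // t ≠ z} where
  toFun := eFun z
  invFun := eInv z
  left_inv := eInv_eFun z
  right_inv := eFun_eInv z
  continuous_toFun := eFun_cont z
  continuous_invFun := eInv_cont z

lemma eFun_tendsto_atTop (z : UnitCircle) :
    Tendsto (fun r => (eFun z r).val) atTop (nhds z) := by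
  refine (tendsto_subtype_rng (p := fun z : ℂ => ‖z‖ = 1)).mpr ?_
  have : Tendsto (fun r => z.val * stC r) atTop (nhds (z.val * 1)) :=
    tendsto_const_nhds.mul stC_tendsto_atTop
  rw [mul_one] at this
  exact this

lemma eFun_tendsto_atBot (z : UnitCircle) :
    Tendsto (fun r => (eFun z r).val) atBot (nhds z) := by
  refine (tendsto_subtype_rng (p := fun z : ℂ => ‖z‖ = 1)).mpr ?_
  have : Tendsto (fun r => z.val * stC r) atBot (nhds (z.val * 1)) :=
    tendsto_const_nhds.mul stC_tendsto_atBot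
  rw [mul_one] at this
  exact this


lemma mono_homeo (g : ℝ → ℝ) (hc : Continuous g) (hm : StrictMono g)
    (htop : Tendsto (fun r => |g r|) atTop atTop)
    (hbot : Tendsto (fun r => |g r|) atBot atTop) :
    ∃ H : ℝ ≃ₜ ℝ, ∀ r, H r = g r := by
  have h_top : Tendsto g atTop atTop := by
    apply htop.congr'
    filter_upwards [htop.eventually (eventually_gt_atTop |g 0|),
      eventually_ge_atTop (0:ℝ)] with r h1 h2
    have hg0 : g 0 ≤ g r := hm.monotone h2
    rcases le_or_gt 0 (g r) with h | h
    · exact abs_of_nonneg h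
    · exfalso
      have e1 : |g r| = -(g r) := abs_of_neg h
      have e2 : -(g 0) ≤ |g 0| := neg_le_abs _
      linarith
  have h_bot : Tendsto g atBot atBot := by
    have hneg : Tendsto (fun r => -|g r|) atBot atBot :=
      tendsto_neg_atTop_atBot.comp hbot
    apply hneg.congr'
    filter_upwards [hbot.eventually (eventually_gt_atTop |g 0|),
      eventually_le_atBot (0:ℝ)] with r h1 h2
    have hg0 : g r ≤ g 0 := hm.monotone h2
    rcases le_or_gt 0 (g r) with h | h
    · exfalso
      have e1 : |g r| = g r := abs_of_nonneg h
      have e2 : g 0 ≤ |g 0| := le_abs_self _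
      linarith
    · rw [abs_of_neg h, neg_neg]
  have hsurj := hc.surjective h_top h_bot
  exact ⟨(hm.orderIsoOfSurjective g hsurj).toHomeomorph, fun r => rfl⟩

theorem strictCrossRatio_homeo
    (b : UnitCircle → UnitCircle → UnitCircle → UnitCircle → ℝ)
    (hcont : ContinuousOn
      (fun p : UnitCircle × UnitCircle × UnitCircle × UnitCircle =>
        b p.1 p.2.1 p.2.2.1 p.2.2.2)
      {p | p.1 ≠ p.2.1 ∧ p.2.2.1 ≠ p.2.2.2})
    (ha1 : ∀ x y z t : UnitCircle, x ≠ y → z ≠ t → b x y z t = b z t x y)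
    (ha2 : ∀ x y z t w : UnitCircle, x ≠ y → z ≠ t → x ≠ w → z ≠ w →
      b x y z t = b x y z w * b x w z t)
    (ha3 : ∀ x y z t w : UnitCircle, x ≠ y → z ≠ t → w ≠ y → w ≠ t →
      b x y z t = b x y w t * b w y z t)
    (ha4 : ∀ x y z t : UnitCircle, x ≠ y → z ≠ t →
      (b x y z t = 1 ↔ x = z ∨ y = t))
    (ha5 : ∀ x y z t : UnitCircle, x ≠ y → z ≠ t →
      (b x y z t = 0 ↔ t = x ∨ z = y)) :
    ∀ x y z : UnitCircle, x ≠ y → y ≠ z → x ≠ z →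
      (∃ h : {t : UnitCircle // t ≠ z} ≃ₜ ℝ,
        ∀ t : {t : UnitCircle // t ≠ z}, h t = b x y z t.val) ∧
      b x y z x = 0 ∧ b x y z y = 1 := by
  intro x y z hxy hyz hxz
  have hzy : z ≠ y := Ne.symm hyz
  have hzx : z ≠ x := Ne.symm hxz
  have hbx : b x y z x = 0 := (ha5 x y z x hxy hzx).mpr (Or.inl rfl)
  have hby : b x y z y = 1 := (ha4 x y z y hxy hzy).mpr (Or.inr rfl)
  refine ⟨?_, hbx, hby⟩
  set Q := UnitCircle × UnitCircle × UnitCircle × UnitCircle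
  set bigb : Q → ℝ := fun p => b p.1 p.2.1 p.2.2.1 p.2.2.2 with hbigb
  set S : Set Q := {p | p.1 ≠ p.2.1 ∧ p.2.2.1 ≠ p.2.2.2} with hS
  have hSopen : IsOpen S := by
    apply IsOpen.inter
    · exact isOpen_ne_fun continuous_fst (continuous_fst.comp continuous_snd)
    · exact isOpen_ne_fun
        (continuous_fst.comp (continuous_snd.comp continuous_snd))
        (continuous_snd.comp (continuous_snd.comp continuous_snd))
  have hbigcont : ∀ p ∈ S, ContinuousAt bigb p :=
    fun p hp => hcont.continuousAt (hSopen.mem_nhds hp)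
  -- the map f
  set f : {t : UnitCircle // t ≠ z} → ℝ := fun t => b x y z t.val with hf
  have fcont : Continuous f := by
    rw [continuous_iff_continuousAt]
    intro t
    have h4 : Continuous fun t : {t : UnitCircle // t ≠ z} =>
        ((x, y, z, t.val) : Q) :=
      continuous_const.prodMk (continuous_const.prodMk
        (continuous_const.prodMk continuous_subtype_val))
    have h6 : ContinuousAt (bigb ∘ fun t : {t : UnitCircle // t ≠ z} =>
        ((x, y, z, t.val) : Q)) t :=
      ContinuousAt.comp
        (hbigcont (x, y, z, t.val) ⟨hxy, Ne.symm t.property⟩) h4.continuousAt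
    exact h6
  -- injectivity
  have finj : Function.Injective f := by
    intro s t hst
    by_cases h0 : f t = 0
    · have hs0 : f s = 0 := by rw [hst, h0]
      have ht' := (ha5 x y z t.val hxy (Ne.symm t.property)).mp h0
      have hs' := (ha5 x y z s.val hxy (Ne.symm s.property)).mp hs0
      rcases ht' with ht' | ht'
      · rcases hs' with hs' | hs'
        · exact Subtype.ext (UnitCircle.ext_iff'.mpr (by
            rw [UnitCircle.ext_iff'] at ht' hs'; rw [hs', ht']))
        · exact absurd hs' hzy
      · exact absurd ht' hzy
    · have hxs : x ≠ s.val := by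
        intro h
        apply h0
        rw [← hst, hf]
        exact (ha5 x y z s.val hxy (Ne.symm s.property)).mpr (Or.inl h.symm)
      have key := ha2 x y z t.val s.val hxy (Ne.symm t.property) hxs (Ne.symm s.property)
      have : f t = f s * b x s.val z t.val := key
      rw [hst] at this
      have hone : b x s.val z t.val = 1 := by
        have h2 : f t * 1 = f t * b x s.val z t.val := by rw [mul_one]; exact this
        exact (mul_left_cancel₀ h0 h2).symm
      have := (ha4 x s.val z t.val hxs (Ne.symm t.property)).mp hone
      rcases this with h | h
      · exact absurd h hxz
      · exact Subtype.ext h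
  -- reciprocal identity
  set B : UnitCircle → ℝ := fun s => b x s z y with hB
  have recip : ∀ t : {t : UnitCircle // t ≠ z}, t.val ≠ x → f t * B t.val = 1 := by
    intro t htx
    have h := ha2 x y z y t.val hxy hzy (Ne.symm htx) (Ne.symm t.property)
    rw [hby] at h
    exact h.symm
  have hBz : B z = 0 := (ha5 x z z y hxz hzy).mpr (Or.inr rfl)
  have Bcont : ContinuousAt B z := by
    have h4 : Continuous fun s : UnitCircle => ((x, s, z, y) : Q) :=
      continuous_const.prodMk (continuous_id.prodMk
        (continuous_const.prodMk continuous_const))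
    have h5 : ContinuousAt (fun s : UnitCircle => ((x, s, z, y) : Q)) z :=
      h4.continuousAt
    have h6 : ContinuousAt (bigb ∘ fun s : UnitCircle => ((x, s, z, y) : Q)) z :=
      ContinuousAt.comp (hbigcont (x, z, z, y) ⟨hxz, hzy⟩) h5
    exact h6
  -- the composed map g
  set g : ℝ → ℝ := fun r => f (eFun z r) with hg
  have gcont : Continuous g := fcont.comp (eFun_cont z)
  have ginj : Function.Injective g :=
    finj.comp (Function.LeftInverse.injective (eInv_eFun z))
  set x' : {t : UnitCircle // t ≠ z} := ⟨x, hxz⟩ with hx'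
  have habs : ∀ l : Filter ℝ,
      Tendsto (fun r => (eFun z r).val) l (nhds z) →
      (∀ᶠ r in l, r ≠ eInv z x') →
      Tendsto (fun r => |g r|) l atTop := by
    intro l hl hne
    have hne' : ∀ᶠ r in l, (eFun z r).val.val ≠ x.val := by
      filter_upwards [hne] with r hr
      intro h
      apply hr
      have : eFun z r = x' := Subtype.ext (UnitCircle.ext_iff'.mpr h)
      rw [← this, eInv_eFun]
    have hBtend : Tendsto (fun r => B (eFun z r).val) l (nhds 0) := by
      have := Bcont.tendsto.comp hl
      rwa [hBz] at this
    have hBne : ∀ᶠ r in l, B (eFun z r).val ≠ 0 := by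
      filter_upwards [hne'] with r hr
      have := recip (eFun z r) (fun h => hr (congrArg Subtype.val h))
      exact right_ne_zero_of_mul_eq_one this
    have habsB : Tendsto (fun r => |B (eFun z r).val|) l (nhdsWithin 0 (Set.Ioi 0)) := by
      rw [tendsto_nhdsWithin_iff]
      constructor
      · have := hBtend.abs; rwa [abs_zero] at this
      · filter_upwards [hBne] with r hr
        exact Set.mem_Ioi.mpr (abs_pos.mpr hr)
    have hinv := habsB.inv_tendsto_nhdsGT_zero
    apply hinv.congr'
    filter_upwards [hne'] with r hr
    have hrec := recip (eFun z r) (fun h => hr (congrArg Subtype.val h))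
    have : g r = (B (eFun z r).val)⁻¹ := eq_inv_of_mul_eq_one_left hrec
    simp only [Pi.inv_apply]
    rw [this, abs_inv]
  have hevtop : ∀ᶠ r in atTop, r ≠ eInv z x' := eventually_ne_atTop _
  have hevbot : ∀ᶠ r in atBot, r ≠ eInv z x' := eventually_ne_atBot _
  have habs_top := habs atTop (eFun_tendsto_atTop z) hevtop
  have habs_bot := habs atBot (eFun_tendsto_atBot z) hevbot
  have hfinal : ∀ t : {t : UnitCircle // t ≠ z}, f t = b x y z t.val := fun t => rfl
  rcases gcont.strictMono_of_inj ginj with hm | han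
  · obtain ⟨H, hH⟩ := mono_homeo g gcont hm habs_top habs_bot
    refine ⟨(eHomeo z).symm.trans H, fun t => ?_⟩
    have : ((eHomeo z).symm.trans H) t = H (eInv z t) := rfl
    rw [this, hH]
    show f (eFun z (eInv z t)) = b x y z t.val
    rw [eFun_eInv]
  · set g' : ℝ → ℝ := fun r => -(g r) with hg'
    have hm' : StrictMono g' := han.neg
    have gcont' : Continuous g' := gcont.neg
    have habs_top' : Tendsto (fun r => |g' r|) atTop atTop := by
      apply habs_top.congr
      intro r
      rw [hg']
      exact (abs_neg (g r)).symm
    have habs_bot' : Tendsto (fun r => |g' r|) atBot atTop := by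
      apply habs_bot.congr
      intro r
      rw [hg']
      exact (abs_neg (g r)).symm
    obtain ⟨H, hH⟩ := mono_homeo g' gcont' hm' habs_top' habs_bot'
    refine ⟨(eHomeo z).symm.trans (H.trans (Homeomorph.neg ℝ)), fun t => ?_⟩
    have : ((eHomeo z).symm.trans (H.trans (Homeomorph.neg ℝ))) t
        = -(H (eInv z t)) := rfl
    rw [this, hH, hg']
    simp only [neg_neg]
    show f (eFun z (eInv z t)) = b x y z t.val
    rw [eFun_eInv]
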